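/- Suppose A' = D·A·C and B' = E·B·F, where D ∈ Q(N₋,n,N₊), C ∈ Q(M₋,m,M₊), E ∈ Q(M₋,m,M₊), F ∈ Q(K₋,l,K₊). Then there exist D' ∈ Q(M₋+N₋, n, N₊+M₊) and F' ∈ Q(K₋+M₋, l, M₊+K₊) such that A'⊛B' = D'·(A⊛B)·F'. Consequently the double coset Q(M₋+N₋,n,N₊+M₊)·(A⊛B)·Q(K₋+M₋,l,M₊+K₊) depends only on the double cosets Q(N₋,n,N₊)·A·Q(M₋,m,M₊) and Q(M₋,m,M₊)·B·Q(K₋,l,K₊). -/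

import Mathlib

namespace Neretin

open Matrix

/-- Membership in the group `Q` of invertible block matrices of the form
`[[*,*,*],[0,1,*],[0,0,*]]` with respect to a three-block partition of the index set. -/
def IsQ {k : Type*} [Field k] {α β γ : Type*} [Fintype α] [Fintype β] [Fintype γ]
    [DecidableEq α] [DecidableEq β] [DecidableEq γ]
    (M : Matrix (α ⊕ β ⊕ γ) (α ⊕ β ⊕ γ) k) : Prop :=
  IsUnit M ∧
  (∀ i j, M (Sum.inr (Sum.inl i)) (Sum.inl j) = 0) ∧
  (∀ i j, M (Sum.inr (Sum.inl i)) (Sum.inr (Sum.inl j)) = (if i = j then (1 : k) else 0)) ∧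
  (∀ i j, M (Sum.inr (Sum.inr i)) (Sum.inl j) = 0) ∧
  (∀ i j, M (Sum.inr (Sum.inr i)) (Sum.inr (Sum.inl j)) = 0)

/-- The product `A ⊛ B` of two block matrices, a representative of the product of
double cosets. Row blocks `(σ₁, ρ₁, s, ρ₃, σ₃)`, column blocks `(τ₁, σ₁, w, σ₃, τ₃)`,
regrouped as three blocks `(σ₁ ⊕ ρ₁, s, ρ₃ ⊕ σ₃)` and `(τ₁ ⊕ σ₁, w, σ₃ ⊕ τ₃)`. -/
def starMul {k : Type*} [Field k] {ρ₁ ρ₃ σ₁ σ₃ τ₁ τ₃ : Type*} {s t w : ℕ}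
    (X : Matrix (ρ₁ ⊕ Fin s ⊕ ρ₃) (σ₁ ⊕ Fin t ⊕ σ₃) k)
    (Y : Matrix (σ₁ ⊕ Fin t ⊕ σ₃) (τ₁ ⊕ Fin w ⊕ τ₃) k) :
    Matrix ((σ₁ ⊕ ρ₁) ⊕ Fin s ⊕ (ρ₃ ⊕ σ₃)) ((τ₁ ⊕ σ₁) ⊕ Fin w ⊕ (σ₃ ⊕ τ₃)) k :=
  Matrix.of fun r c =>
    match r, c with
    | Sum.inl (Sum.inl i), Sum.inl (Sum.inl j) => Y (Sum.inl i) (Sum.inl j)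
    | Sum.inl (Sum.inl _), Sum.inl (Sum.inr _) => 0
    | Sum.inl (Sum.inl i), Sum.inr (Sum.inl j) => Y (Sum.inl i) (Sum.inr (Sum.inl j))
    | Sum.inl (Sum.inl _), Sum.inr (Sum.inr (Sum.inl _)) => 0
    | Sum.inl (Sum.inl i), Sum.inr (Sum.inr (Sum.inr j)) => Y (Sum.inl i) (Sum.inr (Sum.inr j))
    | Sum.inl (Sum.inr i), Sum.inl (Sum.inl j) =>
        ∑ s', X (Sum.inl i) (Sum.inr (Sum.inl s')) * Y (Sum.inr (Sum.inl s')) (Sum.inl j)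
    | Sum.inl (Sum.inr i), Sum.inl (Sum.inr j) => X (Sum.inl i) (Sum.inl j)
    | Sum.inl (Sum.inr i), Sum.inr (Sum.inl j) =>
        ∑ s', X (Sum.inl i) (Sum.inr (Sum.inl s')) * Y (Sum.inr (Sum.inl s')) (Sum.inr (Sum.inl j))
    | Sum.inl (Sum.inr i), Sum.inr (Sum.inr (Sum.inl j)) => X (Sum.inl i) (Sum.inr (Sum.inr j))
    | Sum.inl (Sum.inr i), Sum.inr (Sum.inr (Sum.inr j)) =>
        ∑ s', X (Sum.inl i) (Sum.inr (Sum.inl s')) * Y (Sum.inr (Sum.inl s')) (Sum.inr (Sum.inr j))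
    | Sum.inr (Sum.inl i), Sum.inl (Sum.inl j) =>
        ∑ s', X (Sum.inr (Sum.inl i)) (Sum.inr (Sum.inl s')) * Y (Sum.inr (Sum.inl s')) (Sum.inl j)
    | Sum.inr (Sum.inl i), Sum.inl (Sum.inr j) => X (Sum.inr (Sum.inl i)) (Sum.inl j)
    | Sum.inr (Sum.inl i), Sum.inr (Sum.inl j) =>
        ∑ s', X (Sum.inr (Sum.inl i)) (Sum.inr (Sum.inl s')) * Y (Sum.inr (Sum.inl s')) (Sum.inr (Sum.inl j))
    | Sum.inr (Sum.inl i), Sum.inr (Sum.inr (Sum.inl j)) => X (Sum.inr (Sum.inl i)) (Sum.inr (Sum.inr j))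
    | Sum.inr (Sum.inl i), Sum.inr (Sum.inr (Sum.inr j)) =>
        ∑ s', X (Sum.inr (Sum.inl i)) (Sum.inr (Sum.inl s')) * Y (Sum.inr (Sum.inl s')) (Sum.inr (Sum.inr j))
    | Sum.inr (Sum.inr (Sum.inl i)), Sum.inl (Sum.inl j) =>
        ∑ s', X (Sum.inr (Sum.inr i)) (Sum.inr (Sum.inl s')) * Y (Sum.inr (Sum.inl s')) (Sum.inl j)
    | Sum.inr (Sum.inr (Sum.inl i)), Sum.inl (Sum.inr j) => X (Sum.inr (Sum.inr i)) (Sum.inl j)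
    | Sum.inr (Sum.inr (Sum.inl i)), Sum.inr (Sum.inl j) =>
        ∑ s', X (Sum.inr (Sum.inr i)) (Sum.inr (Sum.inl s')) * Y (Sum.inr (Sum.inl s')) (Sum.inr (Sum.inl j))
    | Sum.inr (Sum.inr (Sum.inl i)), Sum.inr (Sum.inr (Sum.inl j)) => X (Sum.inr (Sum.inr i)) (Sum.inr (Sum.inr j))
    | Sum.inr (Sum.inr (Sum.inl i)), Sum.inr (Sum.inr (Sum.inr j)) =>
        ∑ s', X (Sum.inr (Sum.inr i)) (Sum.inr (Sum.inl s')) * Y (Sum.inr (Sum.inl s')) (Sum.inr (Sum.inr j))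
    | Sum.inr (Sum.inr (Sum.inr i)), Sum.inl (Sum.inl j) => Y (Sum.inr (Sum.inr i)) (Sum.inl j)
    | Sum.inr (Sum.inr (Sum.inr _)), Sum.inl (Sum.inr _) => 0
    | Sum.inr (Sum.inr (Sum.inr i)), Sum.inr (Sum.inl j) => Y (Sum.inr (Sum.inr i)) (Sum.inr (Sum.inl j))
    | Sum.inr (Sum.inr (Sum.inr _)), Sum.inr (Sum.inr (Sum.inl _)) => 0
    | Sum.inr (Sum.inr (Sum.inr i)), Sum.inr (Sum.inr (Sum.inr j)) => Y (Sum.inr (Sum.inr i)) (Sum.inr (Sum.inr j))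


section Aux
variable {k : Type*} [Field k]
variable {ρ₁ ρ₃ σ₁ σ₃ τ₁ τ₃ : Type*} {s t w : ℕ}
variable [Fintype ρ₁] [Fintype ρ₃] [Fintype σ₁] [Fintype σ₃] [Fintype τ₁] [Fintype τ₃]
variable [DecidableEq ρ₁] [DecidableEq ρ₃] [DecidableEq σ₁] [DecidableEq σ₃]
  [DecidableEq τ₁] [DecidableEq τ₃]

/-- Reindex the big row type as (X-rows) ⊕ (σ₁ ⊕ σ₃). -/
def carD : ((σ₁ ⊕ ρ₁) ⊕ Fin s ⊕ (ρ₃ ⊕ σ₃)) ≃ ((ρ₁ ⊕ Fin s ⊕ ρ₃) ⊕ (σ₁ ⊕ σ₃)) where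
  toFun x := match x with
    | .inl (.inl i) => .inr (.inl i)
    | .inl (.inr i) => .inl (.inl i)
    | .inr (.inl i) => .inl (.inr (.inl i))
    | .inr (.inr (.inl i)) => .inl (.inr (.inr i))
    | .inr (.inr (.inr i)) => .inr (.inr i)
  invFun x := match x with
    | .inl (.inl i) => .inl (.inr i)
    | .inl (.inr (.inl i)) => .inr (.inl i)
    | .inl (.inr (.inr i)) => .inr (.inr (.inl i))
    | .inr (.inl i) => .inl (.inl i)
    | .inr (.inr i) => .inr (.inr (.inr i))
  left_inv := by rintro ((i|i)|i|(i|i)) <;> rfl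
  right_inv := by rintro ((i|i|i)|(i|i)) <;> rfl

/-- Reindex the middle type with inner block the middle three summands. -/
def carC : (σ₁ ⊕ (σ₁ ⊕ Fin t ⊕ σ₃) ⊕ σ₃) ≃ ((σ₁ ⊕ Fin t ⊕ σ₃) ⊕ (σ₁ ⊕ σ₃)) where
  toFun x := match x with
    | .inl i => .inr (.inl i)
    | .inr (.inl c) => .inl c
    | .inr (.inr i) => .inr (.inr i)
  invFun x := match x with
    | .inl c => .inr (.inl c)
    | .inr (.inl i) => .inl i
    | .inr (.inr i) => .inr (.inr i)
  left_inv := by rintro (i|(c|c|c)|i) <;> rfl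
  right_inv := by rintro ((c|c|c)|(i|i)) <;> rfl

/-- Reindex the middle type with inner block the summands carrying `Y`-rows. -/
def carE : (σ₁ ⊕ (σ₁ ⊕ Fin t ⊕ σ₃) ⊕ σ₃) ≃ ((σ₁ ⊕ Fin t ⊕ σ₃) ⊕ (σ₁ ⊕ σ₃)) where
  toFun x := match x with
    | .inl i => .inl (.inl i)
    | .inr (.inl (.inl i)) => .inr (.inl i)
    | .inr (.inl (.inr (.inl i))) => .inl (.inr (.inl i))
    | .inr (.inl (.inr (.inr i))) => .inr (.inr i)
    | .inr (.inr i) => .inl (.inr (.inr i))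
  invFun x := match x with
    | .inl (.inl i) => .inl i
    | .inl (.inr (.inl i)) => .inr (.inl (.inr (.inl i)))
    | .inl (.inr (.inr i)) => .inr (.inr i)
    | .inr (.inl i) => .inr (.inl (.inl i))
    | .inr (.inr i) => .inr (.inl (.inr (.inr i)))
  left_inv := by rintro (i|(c|c|c)|i) <;> rfl
  right_inv := by rintro ((c|c|c)|(i|i)) <;> rfl

/-- Reindex the big column type as (Y-cols) ⊕ (σ₁ ⊕ σ₃). -/
def carF : ((τ₁ ⊕ σ₁) ⊕ Fin w ⊕ (σ₃ ⊕ τ₃)) ≃ ((τ₁ ⊕ Fin w ⊕ τ₃) ⊕ (σ₁ ⊕ σ₃)) where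
  toFun x := match x with
    | .inl (.inl i) => .inl (.inl i)
    | .inl (.inr i) => .inr (.inl i)
    | .inr (.inl i) => .inl (.inr (.inl i))
    | .inr (.inr (.inl i)) => .inr (.inr i)
    | .inr (.inr (.inr i)) => .inl (.inr (.inr i))
  invFun x := match x with
    | .inl (.inl i) => .inl (.inl i)
    | .inl (.inr (.inl i)) => .inr (.inl i)
    | .inl (.inr (.inr i)) => .inr (.inr (.inr i))
    | .inr (.inl i) => .inl (.inr i)
    | .inr (.inr i) => .inr (.inr (.inl i))
  left_inv := by rintro ((i|i)|i|(i|i)) <;> rfl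
  right_inv := by rintro ((i|i|i)|(i|i)) <;> rfl

variable (k)

def bigX (X : Matrix (ρ₁ ⊕ Fin s ⊕ ρ₃) (σ₁ ⊕ Fin t ⊕ σ₃) k) :
    Matrix ((σ₁ ⊕ ρ₁) ⊕ Fin s ⊕ (ρ₃ ⊕ σ₃)) (σ₁ ⊕ (σ₁ ⊕ Fin t ⊕ σ₃) ⊕ σ₃) k :=
  (fromBlocks X 0 0 1).submatrix carD carC

def bigXinv (X' : Matrix (σ₁ ⊕ Fin t ⊕ σ₃) (ρ₁ ⊕ Fin s ⊕ ρ₃) k) :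
    Matrix (σ₁ ⊕ (σ₁ ⊕ Fin t ⊕ σ₃) ⊕ σ₃) ((σ₁ ⊕ ρ₁) ⊕ Fin s ⊕ (ρ₃ ⊕ σ₃)) k :=
  (fromBlocks X' 0 0 1).submatrix carC carD

def bigY (Y : Matrix (σ₁ ⊕ Fin t ⊕ σ₃) (τ₁ ⊕ Fin w ⊕ τ₃) k) :
    Matrix (σ₁ ⊕ (σ₁ ⊕ Fin t ⊕ σ₃) ⊕ σ₃) ((τ₁ ⊕ σ₁) ⊕ Fin w ⊕ (σ₃ ⊕ τ₃)) k :=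
  (fromBlocks Y 0 0 1).submatrix carE carF

def bigYinv (Y' : Matrix (τ₁ ⊕ Fin w ⊕ τ₃) (σ₁ ⊕ Fin t ⊕ σ₃) k) :
    Matrix ((τ₁ ⊕ σ₁) ⊕ Fin w ⊕ (σ₃ ⊕ τ₃)) (σ₁ ⊕ (σ₁ ⊕ Fin t ⊕ σ₃) ⊕ σ₃) k :=
  (fromBlocks Y' 0 0 1).submatrix carF carE

def Dtil (D : Matrix (ρ₁ ⊕ Fin s ⊕ ρ₃) (ρ₁ ⊕ Fin s ⊕ ρ₃) k) :
    Matrix ((σ₁ ⊕ ρ₁) ⊕ Fin s ⊕ (ρ₃ ⊕ σ₃)) ((σ₁ ⊕ ρ₁) ⊕ Fin s ⊕ (ρ₃ ⊕ σ₃)) k :=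
  (fromBlocks D 0 0 1).submatrix carD carD

def Chat (C : Matrix (σ₁ ⊕ Fin t ⊕ σ₃) (σ₁ ⊕ Fin t ⊕ σ₃) k) :
    Matrix (σ₁ ⊕ (σ₁ ⊕ Fin t ⊕ σ₃) ⊕ σ₃) (σ₁ ⊕ (σ₁ ⊕ Fin t ⊕ σ₃) ⊕ σ₃) k :=
  (fromBlocks C 0 0 1).submatrix carC carC

def Ehat (E : Matrix (σ₁ ⊕ Fin t ⊕ σ₃) (σ₁ ⊕ Fin t ⊕ σ₃) k) :
    Matrix (σ₁ ⊕ (σ₁ ⊕ Fin t ⊕ σ₃) ⊕ σ₃) (σ₁ ⊕ (σ₁ ⊕ Fin t ⊕ σ₃) ⊕ σ₃) k :=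
  (fromBlocks E 0 0 1).submatrix carE carE

def Fhat (F : Matrix (τ₁ ⊕ Fin w ⊕ τ₃) (τ₁ ⊕ Fin w ⊕ τ₃) k) :
    Matrix ((τ₁ ⊕ σ₁) ⊕ Fin w ⊕ (σ₃ ⊕ τ₃)) ((τ₁ ⊕ σ₁) ⊕ Fin w ⊕ (σ₃ ⊕ τ₃)) k :=
  (fromBlocks F 0 0 1).submatrix carF carF

variable {k}

lemma fb_mul {α β : Type*} [Fintype α] [Fintype β] [DecidableEq β]
    (X : Matrix α β k) (Y : Matrix β β k) (Z : Matrix β α k) : True := trivial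


set_option maxHeartbeats 2000000 in
lemma starMul_eq (X : Matrix (ρ₁ ⊕ Fin s ⊕ ρ₃) (σ₁ ⊕ Fin t ⊕ σ₃) k)
    (Y : Matrix (σ₁ ⊕ Fin t ⊕ σ₃) (τ₁ ⊕ Fin w ⊕ τ₃) k) :
    starMul X Y = bigX k X * bigY k Y := by
  ext r c
  rcases r with (r|r)|r|(r|r) <;> rcases c with (c|c)|c|(c|c) <;>
    simp [starMul, bigX, bigY, carD, carC, carE, carF, Matrix.mul_apply,
      Fintype.sum_sum_type, fromBlocks, one_apply, Finset.sum_ite_eq, Finset.sum_ite_eq',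
      mul_comm]

lemma bigX_decomp (D : Matrix (ρ₁ ⊕ Fin s ⊕ ρ₃) (ρ₁ ⊕ Fin s ⊕ ρ₃) k)
    (A : Matrix (ρ₁ ⊕ Fin s ⊕ ρ₃) (σ₁ ⊕ Fin t ⊕ σ₃) k)
    (C : Matrix (σ₁ ⊕ Fin t ⊕ σ₃) (σ₁ ⊕ Fin t ⊕ σ₃) k) :
    bigX k (D * A * C) = Dtil (σ₁ := σ₁) (σ₃ := σ₃) k D * bigX k A * Chat k C := by
  unfold bigX Dtil Chat
  rw [submatrix_mul_equiv _ _ _ carD _, submatrix_mul_equiv _ _ _ carC _,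
    fromBlocks_multiply, fromBlocks_multiply]
  simp

lemma bigY_decomp (E : Matrix (σ₁ ⊕ Fin t ⊕ σ₃) (σ₁ ⊕ Fin t ⊕ σ₃) k)
    (B : Matrix (σ₁ ⊕ Fin t ⊕ σ₃) (τ₁ ⊕ Fin w ⊕ τ₃) k)
    (F : Matrix (τ₁ ⊕ Fin w ⊕ τ₃) (τ₁ ⊕ Fin w ⊕ τ₃) k) :
    bigY k (E * B * F) = Ehat k E * bigY k B * Fhat (σ₁ := σ₁) (σ₃ := σ₃) k F := by
  unfold bigY Ehat Fhat
  rw [submatrix_mul_equiv _ _ _ carE _, submatrix_mul_equiv _ _ _ carF _,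
    fromBlocks_multiply, fromBlocks_multiply]
  simp

lemma bigX_mul_bigXinv (A : Matrix (ρ₁ ⊕ Fin s ⊕ ρ₃) (σ₁ ⊕ Fin t ⊕ σ₃) k)
    (A' : Matrix (σ₁ ⊕ Fin t ⊕ σ₃) (ρ₁ ⊕ Fin s ⊕ ρ₃) k) (h : A * A' = 1) :
    bigX k A * bigXinv k A' = 1 := by
  unfold bigX bigXinv
  rw [submatrix_mul_equiv _ _ _ carC _, fromBlocks_multiply]
  simp [h, fromBlocks_one, submatrix_one_equiv]

lemma bigXinv_mul_bigX (A : Matrix (ρ₁ ⊕ Fin s ⊕ ρ₃) (σ₁ ⊕ Fin t ⊕ σ₃) k)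
    (A' : Matrix (σ₁ ⊕ Fin t ⊕ σ₃) (ρ₁ ⊕ Fin s ⊕ ρ₃) k) (h : A' * A = 1) :
    bigXinv k A' * bigX k A = 1 := by
  unfold bigX bigXinv
  rw [submatrix_mul_equiv _ _ _ carD _, fromBlocks_multiply]
  simp [h, fromBlocks_one, submatrix_one_equiv]

lemma bigY_mul_bigYinv (B : Matrix (σ₁ ⊕ Fin t ⊕ σ₃) (τ₁ ⊕ Fin w ⊕ τ₃) k)
    (B' : Matrix (τ₁ ⊕ Fin w ⊕ τ₃) (σ₁ ⊕ Fin t ⊕ σ₃) k) (h : B * B' = 1) :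
    bigY k B * bigYinv k B' = 1 := by
  unfold bigY bigYinv
  rw [submatrix_mul_equiv _ _ _ carF _, fromBlocks_multiply]
  simp [h, fromBlocks_one, submatrix_one_equiv]

lemma bigYinv_mul_bigY (B : Matrix (σ₁ ⊕ Fin t ⊕ σ₃) (τ₁ ⊕ Fin w ⊕ τ₃) k)
    (B' : Matrix (τ₁ ⊕ Fin w ⊕ τ₃) (σ₁ ⊕ Fin t ⊕ σ₃) k) (h : B' * B = 1) :
    bigYinv k B' * bigY k B = 1 := by
  unfold bigY bigYinv
  rw [submatrix_mul_equiv _ _ _ carE _, fromBlocks_multiply]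
  simp [h, fromBlocks_one, submatrix_one_equiv]

lemma Ehat_mul (E E' : Matrix (σ₁ ⊕ Fin t ⊕ σ₃) (σ₁ ⊕ Fin t ⊕ σ₃) k) :
    Ehat k (E * E') = Ehat k E * Ehat k E' := by
  unfold Ehat
  rw [submatrix_mul_equiv _ _ _ carE _, fromBlocks_multiply]
  simp

lemma Ehat_one : Ehat k (1 : Matrix (σ₁ ⊕ Fin t ⊕ σ₃) (σ₁ ⊕ Fin t ⊕ σ₃) k) = 1 := by
  unfold Ehat
  rw [fromBlocks_one, submatrix_one_equiv]

lemma Chat_mul (C C' : Matrix (σ₁ ⊕ Fin t ⊕ σ₃) (σ₁ ⊕ Fin t ⊕ σ₃) k) :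
    Chat k (C * C') = Chat k C * Chat k C' := by
  unfold Chat
  rw [submatrix_mul_equiv _ _ _ carC _, fromBlocks_multiply]
  simp

lemma Chat_one : Chat k (1 : Matrix (σ₁ ⊕ Fin t ⊕ σ₃) (σ₁ ⊕ Fin t ⊕ σ₃) k) = 1 := by
  unfold Chat; rw [fromBlocks_one, submatrix_one_equiv]

lemma Dtil_mul (D D' : Matrix (ρ₁ ⊕ Fin s ⊕ ρ₃) (ρ₁ ⊕ Fin s ⊕ ρ₃) k) :
    Dtil (σ₁ := σ₁) (σ₃ := σ₃) k (D * D') = Dtil k D * Dtil k D' := by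
  unfold Dtil
  rw [submatrix_mul_equiv _ _ _ carD _, fromBlocks_multiply]
  simp

lemma Dtil_one : Dtil (σ₁ := σ₁) (σ₃ := σ₃) k (1 : Matrix (ρ₁ ⊕ Fin s ⊕ ρ₃) (ρ₁ ⊕ Fin s ⊕ ρ₃) k) = 1 := by
  unfold Dtil; rw [fromBlocks_one, submatrix_one_equiv]

lemma Fhat_mul (F F' : Matrix (τ₁ ⊕ Fin w ⊕ τ₃) (τ₁ ⊕ Fin w ⊕ τ₃) k) :
    Fhat (σ₁ := σ₁) (σ₃ := σ₃) k (F * F') = Fhat k F * Fhat k F' := by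
  unfold Fhat
  rw [submatrix_mul_equiv _ _ _ carF _, fromBlocks_multiply]
  simp

lemma Fhat_one : Fhat (σ₁ := σ₁) (σ₃ := σ₃) k (1 : Matrix (τ₁ ⊕ Fin w ⊕ τ₃) (τ₁ ⊕ Fin w ⊕ τ₃) k) = 1 := by
  unfold Fhat; rw [fromBlocks_one, submatrix_one_equiv]


variable (k)
/-- upper-right block of a Q-matrix `E`, relative to the `carC` grouping -/
def qB (E : Matrix (σ₁ ⊕ Fin t ⊕ σ₃) (σ₁ ⊕ Fin t ⊕ σ₃) k) :
    Matrix (σ₁ ⊕ Fin t ⊕ σ₃) (σ₁ ⊕ σ₃) k :=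
  of fun p o =>
    match o with
    | .inl _ => 0
    | .inr j => match p with
      | .inr (.inl i) => E (.inr (.inl i)) (.inr (.inr j))
      | _ => 0

def rB (E : Matrix (σ₁ ⊕ Fin t ⊕ σ₃) (σ₁ ⊕ Fin t ⊕ σ₃) k) :
    Matrix (σ₁ ⊕ σ₃) (σ₁ ⊕ Fin t ⊕ σ₃) k :=
  of fun o q =>
    match o with
    | .inr _ => 0
    | .inl i => match q with
      | .inr (.inl j) => E (.inl i) (.inr (.inl j))
      | _ => 0

def sB (E : Matrix (σ₁ ⊕ Fin t ⊕ σ₃) (σ₁ ⊕ Fin t ⊕ σ₃) k) :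
    Matrix (σ₁ ⊕ σ₃) (σ₁ ⊕ σ₃) k :=
  of fun o o' =>
    match o, o' with
    | .inl i, .inl j => E (.inl i) (.inl j)
    | .inl i, .inr j => E (.inl i) (.inr (.inr j))
    | .inr _, .inl _ => 0
    | .inr i, .inr j => E (.inr (.inr i)) (.inr (.inr j))
variable {k}

lemma ehat_block (E : Matrix (σ₁ ⊕ Fin t ⊕ σ₃) (σ₁ ⊕ Fin t ⊕ σ₃) k)
    (h2 : ∀ i j, E (Sum.inr (Sum.inl i)) (Sum.inl j) = 0)
    (h3 : ∀ i j, E (Sum.inr (Sum.inl i)) (Sum.inr (Sum.inl j)) = (if i = j then (1 : k) else 0))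
    (h4 : ∀ i j, E (Sum.inr (Sum.inr i)) (Sum.inl j) = 0)
    (h5 : ∀ i j, E (Sum.inr (Sum.inr i)) (Sum.inr (Sum.inl j)) = 0) :
    Ehat k E = (fromBlocks 1 (qB k E) (rB k E) (sB k E)).submatrix carC carC := by
  ext r c
  rcases r with r|(r|r|r)|r <;> rcases c with c|(c|c|c)|c <;>
    simp [Ehat, carE, carC, fromBlocks, qB, rB, sB, one_apply, h2, h3, h4, h5]


lemma isQ_left (A : Matrix (ρ₁ ⊕ Fin s ⊕ ρ₃) (σ₁ ⊕ Fin t ⊕ σ₃) k)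
    (A' : Matrix (σ₁ ⊕ Fin t ⊕ σ₃) (ρ₁ ⊕ Fin s ⊕ ρ₃) k)
    (hAA' : A * A' = 1) (hA'A : A' * A = 1)
    (E : Matrix (σ₁ ⊕ Fin t ⊕ σ₃) (σ₁ ⊕ Fin t ⊕ σ₃) k) (hE : IsQ E) :
    IsQ (bigX k A * Ehat k E * bigXinv k A') := by
  obtain ⟨hEu, h2, h3, h4, h5⟩ := hE
  have key : bigX k A * Ehat k E * bigXinv k A'
      = (fromBlocks 1 (A * qB k E) (rB k E * A') (sB k E)).submatrix carD carD := by
    rw [ehat_block E h2 h3 h4 h5]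
    unfold bigX bigXinv
    rw [submatrix_mul_equiv _ _ _ carC _, submatrix_mul_equiv _ _ _ carC _,
      fromBlocks_multiply, fromBlocks_multiply]
    simp [hAA', Matrix.mul_assoc]
  refine ⟨?_, ?_, ?_, ?_, ?_⟩
  · obtain ⟨P, hEP, hPE⟩ := isUnit_iff_exists.mp hEu
    refine isUnit_iff_exists.mpr ⟨bigX k A * Ehat k P * bigXinv k A', ?_, ?_⟩
    · calc bigX k A * Ehat k E * bigXinv k A' * (bigX k A * Ehat k P * bigXinv k A')
          = bigX k A * Ehat k E * (bigXinv k A' * bigX k A) * Ehat k P * bigXinv k A' := by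
            simp only [Matrix.mul_assoc]
        _ = 1 := by
            rw [bigXinv_mul_bigX A A' hA'A, Matrix.mul_one, Matrix.mul_assoc (bigX k A),
              ← Ehat_mul, hEP, Ehat_one, Matrix.mul_one, bigX_mul_bigXinv A A' hAA']
    · calc bigX k A * Ehat k P * bigXinv k A' * (bigX k A * Ehat k E * bigXinv k A')
          = bigX k A * Ehat k P * (bigXinv k A' * bigX k A) * Ehat k E * bigXinv k A' := by
            simp only [Matrix.mul_assoc]
        _ = 1 := by
            rw [bigXinv_mul_bigX A A' hA'A, Matrix.mul_one, Matrix.mul_assoc (bigX k A),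
              ← Ehat_mul, hPE, Ehat_one, Matrix.mul_one, bigX_mul_bigXinv A A' hAA']
  · rw [key]; rintro i (j|j) <;>
      simp [carD, fromBlocks, one_apply, Matrix.mul_apply, qB]
  · rw [key]; intro i j
    simp [carD, fromBlocks, one_apply]
  · rw [key]; rintro (i|i) (j|j) <;>
      simp [carD, fromBlocks, one_apply, Matrix.mul_apply, qB, rB, sB]
  · rw [key]; rintro (i|i) j <;>
      simp [carD, fromBlocks, one_apply, Matrix.mul_apply, rB]


lemma isQ_mul {α β γ : Type*} [Fintype α] [Fintype β] [Fintype γ]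
    [DecidableEq α] [DecidableEq β] [DecidableEq γ]
    {M N : Matrix (α ⊕ β ⊕ γ) (α ⊕ β ⊕ γ) k} (hM : IsQ M) (hN : IsQ N) :
    IsQ (M * N) := by
  obtain ⟨hMu, m2, m3, m4, m5⟩ := hM
  obtain ⟨hNu, n2, n3, n4, n5⟩ := hN
  refine ⟨hMu.mul hNu, ?_, ?_, ?_, ?_⟩ <;> intro i j <;>
    simp [Matrix.mul_apply, Fintype.sum_sum_type, m2, m3, m4, m5, n2, n3, n4, n5,
      ite_mul, Finset.sum_ite_eq, Finset.sum_ite_eq']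

lemma isQ_inv {α β γ : Type*} [Fintype α] [Fintype β] [Fintype γ]
    [DecidableEq α] [DecidableEq β] [DecidableEq γ]
    {M P : Matrix (α ⊕ β ⊕ γ) (α ⊕ β ⊕ γ) k} (hM : IsQ M)
    (hMP : M * P = 1) (hPM : P * M = 1) : IsQ P := by
  obtain ⟨hMu, m2, m3, m4, m5⟩ := hM
  -- third-block inverse trick
  have p4 : ∀ i j, P (Sum.inr (Sum.inr i)) (Sum.inl j) = 0 := by
    have hM33 : (Matrix.of fun i j => M (Sum.inr (Sum.inr i)) (Sum.inr (Sum.inr j)) : Matrix γ γ k) *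
        (Matrix.of fun i j => P (Sum.inr (Sum.inr i)) (Sum.inr (Sum.inr j))) = 1 := by
      ext i j
      have h := congrFun (congrFun hMP (Sum.inr (Sum.inr i))) (Sum.inr (Sum.inr j))
      simp only [Matrix.mul_apply, Fintype.sum_sum_type] at h
      simp only [m4, m5, zero_mul, Finset.sum_const_zero, zero_add] at h
      simpa [Matrix.mul_apply, Matrix.one_apply] using h
    have hP33 := mul_eq_one_comm.mp hM33
    intro i j
    have hz : ∀ i j, ((Matrix.of fun i j => M (Sum.inr (Sum.inr i)) (Sum.inr (Sum.inr j)) : Matrix γ γ k) *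
        (Matrix.of fun i j => P (Sum.inr (Sum.inr i)) (Sum.inl j) : Matrix γ α k)) i j = 0 := by
      intro i j
      have h := congrFun (congrFun hMP (Sum.inr (Sum.inr i))) (Sum.inl j)
      simp only [Matrix.mul_apply, Fintype.sum_sum_type] at h
      simp only [m4, m5, zero_mul, Finset.sum_const_zero, zero_add] at h
      simpa [Matrix.mul_apply, Matrix.one_apply] using h
    have : (Matrix.of fun i j => P (Sum.inr (Sum.inr i)) (Sum.inl j) : Matrix γ α k) = 0 := by
      have : (Matrix.of fun i j => P (Sum.inr (Sum.inr i)) (Sum.inl j) : Matrix γ α k)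
          = (Matrix.of fun i j => P (Sum.inr (Sum.inr i)) (Sum.inr (Sum.inr j)) : Matrix γ γ k) *
            ((Matrix.of fun i j => M (Sum.inr (Sum.inr i)) (Sum.inr (Sum.inr j)) : Matrix γ γ k) *
             (Matrix.of fun i j => P (Sum.inr (Sum.inr i)) (Sum.inl j) : Matrix γ α k)) := by
        rw [← Matrix.mul_assoc, hP33, Matrix.one_mul]
      rw [this]
      ext i j
      simp [Matrix.mul_apply, hz]
    exact congrFun (congrFun this i) j
  have p5 : ∀ i j, P (Sum.inr (Sum.inr i)) (Sum.inr (Sum.inl j)) = 0 := by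
    have hM33 : (Matrix.of fun i j => M (Sum.inr (Sum.inr i)) (Sum.inr (Sum.inr j)) : Matrix γ γ k) *
        (Matrix.of fun i j => P (Sum.inr (Sum.inr i)) (Sum.inr (Sum.inr j))) = 1 := by
      ext i j
      have h := congrFun (congrFun hMP (Sum.inr (Sum.inr i))) (Sum.inr (Sum.inr j))
      simp only [Matrix.mul_apply, Fintype.sum_sum_type] at h
      simp only [m4, m5, zero_mul, Finset.sum_const_zero, zero_add] at h
      simpa [Matrix.mul_apply, Matrix.one_apply] using h
    have hP33 := mul_eq_one_comm.mp hM33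
    intro i j
    have hz : ∀ i j, ((Matrix.of fun i j => M (Sum.inr (Sum.inr i)) (Sum.inr (Sum.inr j)) : Matrix γ γ k) *
        (Matrix.of fun i j => P (Sum.inr (Sum.inr i)) (Sum.inr (Sum.inl j)) : Matrix γ β k)) i j = 0 := by
      intro i j
      have h := congrFun (congrFun hMP (Sum.inr (Sum.inr i))) (Sum.inr (Sum.inl j))
      simp only [Matrix.mul_apply, Fintype.sum_sum_type] at h
      simp only [m4, m5, zero_mul, Finset.sum_const_zero, zero_add] at h
      simpa [Matrix.mul_apply, Matrix.one_apply] using h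
    have : (Matrix.of fun i j => P (Sum.inr (Sum.inr i)) (Sum.inr (Sum.inl j)) : Matrix γ β k) = 0 := by
      have : (Matrix.of fun i j => P (Sum.inr (Sum.inr i)) (Sum.inr (Sum.inl j)) : Matrix γ β k)
          = (Matrix.of fun i j => P (Sum.inr (Sum.inr i)) (Sum.inr (Sum.inr j)) : Matrix γ γ k) *
            ((Matrix.of fun i j => M (Sum.inr (Sum.inr i)) (Sum.inr (Sum.inr j)) : Matrix γ γ k) *
             (Matrix.of fun i j => P (Sum.inr (Sum.inr i)) (Sum.inr (Sum.inl j)) : Matrix γ β k)) := by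
        rw [← Matrix.mul_assoc, hP33, Matrix.one_mul]
      rw [this]
      ext i j
      simp [Matrix.mul_apply, hz]
    exact congrFun (congrFun this i) j
  have p2 : ∀ i j, P (Sum.inr (Sum.inl i)) (Sum.inl j) = 0 := by
    intro i j
    have h := congrFun (congrFun hMP (Sum.inr (Sum.inl i))) (Sum.inl j)
    simp only [Matrix.mul_apply, Fintype.sum_sum_type] at h
    simp only [m2, m3, zero_mul, Finset.sum_const_zero, zero_add, ite_mul, one_mul,
      Finset.sum_ite_eq, Finset.sum_ite_eq', Finset.mem_univ, if_true, p4, mul_zero] at h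
    simpa [Matrix.one_apply] using h
  have p3 : ∀ i j, P (Sum.inr (Sum.inl i)) (Sum.inr (Sum.inl j)) = (if i = j then (1:k) else 0) := by
    intro i j
    have h := congrFun (congrFun hMP (Sum.inr (Sum.inl i))) (Sum.inr (Sum.inl j))
    simp only [Matrix.mul_apply, Fintype.sum_sum_type] at h
    simp only [m2, m3, zero_mul, Finset.sum_const_zero, zero_add, ite_mul, one_mul,
      Finset.sum_ite_eq, Finset.sum_ite_eq', Finset.mem_univ, if_true, p5, mul_zero] at h
    simpa [Matrix.one_apply] using h
  exact ⟨isUnit_iff_exists.mpr ⟨M, hPM, hMP⟩, p2, p3, p4, p5⟩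

lemma isQ_Dtil (D : Matrix (ρ₁ ⊕ Fin s ⊕ ρ₃) (ρ₁ ⊕ Fin s ⊕ ρ₃) k) (hD : IsQ D) :
    IsQ (Dtil (σ₁ := σ₁) (σ₃ := σ₃) k D) := by
  obtain ⟨hDu, d2, d3, d4, d5⟩ := hD
  obtain ⟨P, hDP, hPD⟩ := isUnit_iff_exists.mp hDu
  refine ⟨isUnit_iff_exists.mpr ⟨Dtil k P, by rw [← Dtil_mul, hDP, Dtil_one],
    by rw [← Dtil_mul, hPD, Dtil_one]⟩, ?_, ?_, ?_, ?_⟩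
  · rintro i (j|j) <;> simp [Dtil, carD, fromBlocks, one_apply, d2]
  · intro i j; simp [Dtil, carD, fromBlocks, one_apply, d3]
  · rintro (i|i) (j|j) <;> simp [Dtil, carD, fromBlocks, one_apply, d4]
  · rintro (i|i) j <;> simp [Dtil, carD, fromBlocks, one_apply, d5]

lemma isQ_Fhat (F : Matrix (τ₁ ⊕ Fin w ⊕ τ₃) (τ₁ ⊕ Fin w ⊕ τ₃) k) (hF : IsQ F) :
    IsQ (Fhat (σ₁ := σ₁) (σ₃ := σ₃) k F) := by
  obtain ⟨hFu, f2, f3, f4, f5⟩ := hF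
  obtain ⟨P, hFP, hPF⟩ := isUnit_iff_exists.mp hFu
  refine ⟨isUnit_iff_exists.mpr ⟨Fhat k P, by rw [← Fhat_mul, hFP, Fhat_one],
    by rw [← Fhat_mul, hPF, Fhat_one]⟩, ?_, ?_, ?_, ?_⟩
  · rintro i (j|j) <;> simp [Fhat, carF, fromBlocks, one_apply, f2]
  · intro i j; simp [Fhat, carF, fromBlocks, one_apply, f3]
  · rintro (i|i) (j|j) <;> simp [Fhat, carF, fromBlocks, one_apply, f4]
  · rintro (i|i) j <;> simp [Fhat, carF, fromBlocks, one_apply, f5]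


lemma isQ_right (B : Matrix (σ₁ ⊕ Fin t ⊕ σ₃) (τ₁ ⊕ Fin w ⊕ τ₃) k)
    (B' : Matrix (τ₁ ⊕ Fin w ⊕ τ₃) (σ₁ ⊕ Fin t ⊕ σ₃) k)
    (hBB' : B * B' = 1) (hB'B : B' * B = 1)
    (Q₂ : Matrix (σ₁ ⊕ Fin t ⊕ σ₃) (σ₁ ⊕ σ₃) k)
    (R₂ : Matrix (σ₁ ⊕ σ₃) (σ₁ ⊕ Fin t ⊕ σ₃) k)
    (S₂ : Matrix (σ₁ ⊕ σ₃) (σ₁ ⊕ σ₃) k)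
    (hQ : ∀ p j, Q₂ p (.inl j) = 0) (hR : ∀ i q, R₂ (.inr i) q = 0)
    (hS : ∀ i j, S₂ (.inr i) (.inl j) = 0)
    (hU : IsUnit ((fromBlocks 1 Q₂ R₂ S₂).submatrix ⇑carE ⇑carE)) :
    IsQ (bigYinv k B' * (fromBlocks 1 Q₂ R₂ S₂).submatrix ⇑carE ⇑carE * bigY k B) := by
  have key : bigYinv k B' * (fromBlocks 1 Q₂ R₂ S₂).submatrix ⇑carE ⇑carE * bigY k B
      = (fromBlocks 1 (B' * Q₂) (R₂ * B) S₂).submatrix carF carF := by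
    unfold bigY bigYinv
    rw [submatrix_mul_equiv _ _ _ carE _, submatrix_mul_equiv _ _ _ carE _,
      fromBlocks_multiply, fromBlocks_multiply]
    simp [hB'B, Matrix.mul_assoc]
  refine ⟨?_, ?_, ?_, ?_, ?_⟩
  · obtain ⟨Hi, h1, h2⟩ := isUnit_iff_exists.mp hU
    refine isUnit_iff_exists.mpr ⟨bigYinv k B' * Hi * bigY k B, ?_, ?_⟩
    · calc bigYinv k B' * (fromBlocks 1 Q₂ R₂ S₂).submatrix ⇑carE ⇑carE * bigY k B *
            (bigYinv k B' * Hi * bigY k B)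
          = bigYinv k B' * (fromBlocks 1 Q₂ R₂ S₂).submatrix ⇑carE ⇑carE *
            (bigY k B * bigYinv k B') * Hi * bigY k B := by simp only [Matrix.mul_assoc]
        _ = 1 := by
            rw [bigY_mul_bigYinv B B' hBB', Matrix.mul_one, Matrix.mul_assoc (bigYinv k B'),
              h1, Matrix.mul_one, bigYinv_mul_bigY B B' hB'B]
    · calc bigYinv k B' * Hi * bigY k B *
            (bigYinv k B' * (fromBlocks 1 Q₂ R₂ S₂).submatrix ⇑carE ⇑carE * bigY k B)
          = bigYinv k B' * Hi * (bigY k B * bigYinv k B') *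
            (fromBlocks 1 Q₂ R₂ S₂).submatrix ⇑carE ⇑carE * bigY k B := by
              simp only [Matrix.mul_assoc]
        _ = 1 := by
            rw [bigY_mul_bigYinv B B' hBB', Matrix.mul_one, Matrix.mul_assoc (bigYinv k B'),
              h2, Matrix.mul_one, bigYinv_mul_bigY B B' hB'B]
  · rw [key]; rintro i (j|j) <;>
      simp [carF, fromBlocks, one_apply, Matrix.mul_apply, hQ]
  · rw [key]; intro i j; simp [carF, fromBlocks, one_apply]
  · rw [key]; rintro (i|i) (j|j) <;>
      simp [carF, fromBlocks, one_apply, Matrix.mul_apply, hQ, hR, hS]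
  · rw [key]; rintro (i|i) j <;>
      simp [carF, fromBlocks, one_apply, Matrix.mul_apply, hR]


set_option maxHeartbeats 2000000 in
lemma GR_pattern (C E P : Matrix (σ₁ ⊕ Fin t ⊕ σ₃) (σ₁ ⊕ Fin t ⊕ σ₃) k)
    (hC2 : ∀ i j, C (Sum.inr (Sum.inl i)) (Sum.inl j) = 0)
    (hC3 : ∀ i j, C (Sum.inr (Sum.inl i)) (Sum.inr (Sum.inl j)) = (if i = j then (1 : k) else 0))
    (hC4 : ∀ i j, C (Sum.inr (Sum.inr i)) (Sum.inl j) = 0)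
    (hC5 : ∀ i j, C (Sum.inr (Sum.inr i)) (Sum.inr (Sum.inl j)) = 0)
    (hE2 : ∀ i j, E (Sum.inr (Sum.inl i)) (Sum.inl j) = 0)
    (hE3 : ∀ i j, E (Sum.inr (Sum.inl i)) (Sum.inr (Sum.inl j)) = (if i = j then (1 : k) else 0))
    (hE4 : ∀ i j, E (Sum.inr (Sum.inr i)) (Sum.inl j) = 0)
    (hE5 : ∀ i j, E (Sum.inr (Sum.inr i)) (Sum.inr (Sum.inl j)) = 0)
    (hP2 : ∀ i j, P (Sum.inr (Sum.inl i)) (Sum.inl j) = 0)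
    (hP3 : ∀ i j, P (Sum.inr (Sum.inl i)) (Sum.inr (Sum.inl j)) = (if i = j then (1 : k) else 0))
    (hP4 : ∀ i j, P (Sum.inr (Sum.inr i)) (Sum.inl j) = 0)
    (hP5 : ∀ i j, P (Sum.inr (Sum.inr i)) (Sum.inr (Sum.inl j)) = 0)
    (hPE : P * E = 1) :
    ∃ (Q₂ : Matrix (σ₁ ⊕ Fin t ⊕ σ₃) (σ₁ ⊕ σ₃) k)
      (R₂ : Matrix (σ₁ ⊕ σ₃) (σ₁ ⊕ Fin t ⊕ σ₃) k)
      (S₂ : Matrix (σ₁ ⊕ σ₃) (σ₁ ⊕ σ₃) k),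
      (∀ p j, Q₂ p (.inl j) = 0) ∧ (∀ i q, R₂ (.inr i) q = 0) ∧
      (∀ i j, S₂ (.inr i) (.inl j) = 0) ∧
      Ehat k P * Chat k C * Ehat k E = (fromBlocks 1 Q₂ R₂ S₂).submatrix ⇑carE ⇑carE := by
  have hW : Ehat k P * Chat k C * Ehat k E =
      ((fromBlocks 1 (qB k P) (rB k P) (sB k P) * fromBlocks C 0 0 1) *
        fromBlocks 1 (qB k E) (rB k E) (sB k E)).submatrix ⇑carC ⇑carC := by
    rw [ehat_block P hP2 hP3 hP4 hP5, ehat_block E hE2 hE3 hE4 hE5]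
    unfold Chat
    rw [submatrix_mul_equiv _ _ _ carC _, submatrix_mul_equiv _ _ _ carC _]
  have pe : ∀ a b, (P * E) a b = (1 : Matrix (σ₁ ⊕ Fin t ⊕ σ₃) (σ₁ ⊕ Fin t ⊕ σ₃) k) a b := by
    intro a b; rw [hPE]
  set GR := Ehat k P * Chat k C * Ehat k E with hGR
  have a1 : ∀ (i j : σ₁), GR (.inl i) (.inl j) = if i = j then 1 else 0 := by
    intro i j
    have h := pe (.inl i) (.inl j)
    simp [Matrix.mul_apply, Fintype.sum_sum_type, Matrix.one_apply, hE2, hE4] at h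
    rw [hW]
    simp [fromBlocks_multiply, fromBlocks, carC, carE, Matrix.mul_apply, Matrix.add_apply,
      Fintype.sum_sum_type, qB, rB, sB, hC2, hC3, hC4, hC5, Matrix.one_apply,
      ite_mul, mul_ite, Finset.sum_ite_eq, Finset.sum_ite_eq']
    linear_combination h
  have a2 : ∀ (i : σ₁) (j : Fin t), GR (.inl i) (.inr (.inl (.inr (.inl j)))) = 0 := by
    intro i j
    have h := pe (.inl i) (.inr (.inl j))
    simp [Matrix.mul_apply, Fintype.sum_sum_type, Matrix.one_apply, hE3, hE5,
      ite_mul, mul_ite, Finset.sum_ite_eq, Finset.sum_ite_eq'] at h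
    rw [hW]
    simp [fromBlocks_multiply, fromBlocks, carC, carE, Matrix.mul_apply, Matrix.add_apply,
      Fintype.sum_sum_type, qB, rB, sB, hC2, hC3, hC4, hC5, Matrix.one_apply,
      ite_mul, mul_ite, Finset.sum_ite_eq, Finset.sum_ite_eq']
    linear_combination h
  have a3 : ∀ (i : σ₁) (j : σ₃), GR (.inl i) (.inr (.inr j)) = 0 := by
    intro i j
    have h := pe (.inl i) (.inr (.inr j))
    simp [Matrix.mul_apply, Fintype.sum_sum_type, Matrix.one_apply] at h
    rw [hW]
    simp [fromBlocks_multiply, fromBlocks, carC, carE, Matrix.mul_apply, Matrix.add_apply,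
      Fintype.sum_sum_type, qB, rB, sB, hC2, hC3, hC4, hC5, Matrix.one_apply,
      ite_mul, mul_ite, Finset.sum_ite_eq, Finset.sum_ite_eq']
    linear_combination h
  have a4 : ∀ (i : Fin t) (j : σ₁), GR (.inr (.inl (.inr (.inl i)))) (.inl j) = 0 := by
    intro i j
    rw [hW]
    simp [fromBlocks_multiply, fromBlocks, carC, carE, Matrix.mul_apply, Matrix.add_apply,
      Fintype.sum_sum_type, qB, rB, sB, hC2, hC3, hC4, hC5, Matrix.one_apply,
      ite_mul, mul_ite, Finset.sum_ite_eq, Finset.sum_ite_eq']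
  have a5 : ∀ (i j : Fin t), GR (.inr (.inl (.inr (.inl i)))) (.inr (.inl (.inr (.inl j)))) =
      if i = j then 1 else 0 := by
    intro i j
    rw [hW]
    simp [fromBlocks_multiply, fromBlocks, carC, carE, Matrix.mul_apply, Matrix.add_apply,
      Fintype.sum_sum_type, qB, rB, sB, hC2, hC3, hC4, hC5, Matrix.one_apply,
      ite_mul, mul_ite, Finset.sum_ite_eq, Finset.sum_ite_eq']
  have a6 : ∀ (i : Fin t) (j : σ₃), GR (.inr (.inl (.inr (.inl i)))) (.inr (.inr j)) = 0 := by
    intro i j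
    have h := pe (.inr (.inl i)) (.inr (.inr j))
    simp [Matrix.mul_apply, Fintype.sum_sum_type, Matrix.one_apply, hP2, hP3,
      ite_mul, mul_ite, Finset.sum_ite_eq, Finset.sum_ite_eq'] at h
    rw [hW]
    simp [fromBlocks_multiply, fromBlocks, carC, carE, Matrix.mul_apply, Matrix.add_apply,
      Fintype.sum_sum_type, qB, rB, sB, hC2, hC3, hC4, hC5, Matrix.one_apply,
      ite_mul, mul_ite, Finset.sum_ite_eq, Finset.sum_ite_eq']
    linear_combination h
  have a7 : ∀ (i : σ₃) (j : σ₁), GR (.inr (.inr i)) (.inl j) = 0 := by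
    intro i j
    rw [hW]
    simp [fromBlocks_multiply, fromBlocks, carC, carE, Matrix.mul_apply, Matrix.add_apply,
      Fintype.sum_sum_type, qB, rB, sB, hC2, hC3, hC4, hC5, Matrix.one_apply,
      ite_mul, mul_ite, Finset.sum_ite_eq, Finset.sum_ite_eq']
  have a8 : ∀ (i : σ₃) (j : Fin t), GR (.inr (.inr i)) (.inr (.inl (.inr (.inl j)))) = 0 := by
    intro i j
    rw [hW]
    simp [fromBlocks_multiply, fromBlocks, carC, carE, Matrix.mul_apply, Matrix.add_apply,
      Fintype.sum_sum_type, qB, rB, sB, hC2, hC3, hC4, hC5, Matrix.one_apply,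
      ite_mul, mul_ite, Finset.sum_ite_eq, Finset.sum_ite_eq']
  have a9 : ∀ (i j : σ₃), GR (.inr (.inr i)) (.inr (.inr j)) = if i = j then 1 else 0 := by
    intro i j
    have h := pe (.inr (.inr i)) (.inr (.inr j))
    simp [Matrix.mul_apply, Fintype.sum_sum_type, Matrix.one_apply, hP4, hP5] at h
    rw [hW]
    simp [fromBlocks_multiply, fromBlocks, carC, carE, Matrix.mul_apply, Matrix.add_apply,
      Fintype.sum_sum_type, qB, rB, sB, hC2, hC3, hC4, hC5, Matrix.one_apply,
      ite_mul, mul_ite, Finset.sum_ite_eq, Finset.sum_ite_eq']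
    linear_combination h
  have b1 : ∀ (i : σ₁) (j : σ₁), GR (.inl i) (.inr (.inl (.inl j))) = 0 := by
    intro i j
    rw [hW]
    simp [fromBlocks_multiply, fromBlocks, carC, carE, Matrix.mul_apply, Matrix.add_apply,
      Fintype.sum_sum_type, qB, rB, sB, hC2, hC3, hC4, hC5, Matrix.one_apply,
      ite_mul, mul_ite, Finset.sum_ite_eq, Finset.sum_ite_eq']
  have b2 : ∀ (i : Fin t) (j : σ₁), GR (.inr (.inl (.inr (.inl i)))) (.inr (.inl (.inl j))) = 0 := by
    intro i j
    rw [hW]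
    simp [fromBlocks_multiply, fromBlocks, carC, carE, Matrix.mul_apply, Matrix.add_apply,
      Fintype.sum_sum_type, qB, rB, sB, hC2, hC3, hC4, hC5, Matrix.one_apply,
      ite_mul, mul_ite, Finset.sum_ite_eq, Finset.sum_ite_eq']
  have b3 : ∀ (i : σ₃) (j : σ₁), GR (.inr (.inr i)) (.inr (.inl (.inl j))) = 0 := by
    intro i j
    rw [hW]
    simp [fromBlocks_multiply, fromBlocks, carC, carE, Matrix.mul_apply, Matrix.add_apply,
      Fintype.sum_sum_type, qB, rB, sB, hC2, hC3, hC4, hC5, Matrix.one_apply,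
      ite_mul, mul_ite, Finset.sum_ite_eq, Finset.sum_ite_eq']
  have c1 : ∀ (i : σ₃) (j : σ₁), GR (.inr (.inl (.inr (.inr i)))) (.inl j) = 0 := by
    intro i j
    rw [hW]
    simp [fromBlocks_multiply, fromBlocks, carC, carE, Matrix.mul_apply, Matrix.add_apply,
      Fintype.sum_sum_type, qB, rB, sB, hC2, hC3, hC4, hC5, Matrix.one_apply,
      ite_mul, mul_ite, Finset.sum_ite_eq, Finset.sum_ite_eq']
  have c2 : ∀ (i : σ₃) (j : Fin t), GR (.inr (.inl (.inr (.inr i)))) (.inr (.inl (.inr (.inl j)))) = 0 := by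
    intro i j
    rw [hW]
    simp [fromBlocks_multiply, fromBlocks, carC, carE, Matrix.mul_apply, Matrix.add_apply,
      Fintype.sum_sum_type, qB, rB, sB, hC2, hC3, hC4, hC5, Matrix.one_apply,
      ite_mul, mul_ite, Finset.sum_ite_eq, Finset.sum_ite_eq']
  have c3 : ∀ (i : σ₃) (j : σ₃), GR (.inr (.inl (.inr (.inr i)))) (.inr (.inr j)) = 0 := by
    intro i j
    rw [hW]
    simp [fromBlocks_multiply, fromBlocks, carC, carE, Matrix.mul_apply, Matrix.add_apply,
      Fintype.sum_sum_type, qB, rB, sB, hC2, hC3, hC4, hC5, Matrix.one_apply,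
      ite_mul, mul_ite, Finset.sum_ite_eq, Finset.sum_ite_eq']
  have d1 : ∀ (i : σ₃) (j : σ₁), GR (.inr (.inl (.inr (.inr i)))) (.inr (.inl (.inl j))) = 0 := by
    intro i j
    rw [hW]
    simp [fromBlocks_multiply, fromBlocks, carC, carE, Matrix.mul_apply, Matrix.add_apply,
      Fintype.sum_sum_type, qB, rB, sB, hC2, hC3, hC4, hC5, Matrix.one_apply,
      ite_mul, mul_ite, Finset.sum_ite_eq, Finset.sum_ite_eq']
  refine ⟨Matrix.of fun p o => GR (carE.symm (.inl p)) (carE.symm (.inr o)),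
    Matrix.of fun o p => GR (carE.symm (.inr o)) (carE.symm (.inl p)),
    Matrix.of fun o o' => GR (carE.symm (.inr o)) (carE.symm (.inr o')), ?_, ?_, ?_, ?_⟩
  · rintro (p|p|p) j <;>
      simp [carE, Equiv.coe_fn_symm_mk, b1, b2, b3]
  · rintro i (q|q|q) <;>
      simp [carE, Equiv.coe_fn_symm_mk, c1, c2, c3]
  · rintro i j
    simp [carE, Equiv.coe_fn_symm_mk, d1]
  · ext x y
    rcases x with x|(x|x|x)|x <;> rcases y with y|(y|y|y)|y <;>
      simp [carE, Equiv.coe_fn_mk, Equiv.coe_fn_symm_mk, fromBlocks, Matrix.one_apply,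
        a1, a2, a3, a4, a5, a6, a7, a8, a9]

end Aux

/-- If `A' = D·A·C` and `B' = E·B·F` with `D ∈ Q(N₋,n,N₊)`,
`C, E ∈ Q(M₋,m,M₊)`, `F ∈ Q(K₋,l,K₊)`, then there are `D' ∈ Q(M₋+N₋,n,N₊+M₊)` and
`F' ∈ Q(K₋+M₋,l,M₊+K₊)` with `A'⊛B' = D'·(A⊛B)·F'`; hence the double coset of `A⊛B`
depends only on the double cosets of `A` and of `B`. -/
theorem doubleCoset_product_well_defined (k : Type*) [Field k]
    (N₁ n N₂ M₁ m M₂ K₁ l K₂ : ℕ)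
    (hNM : N₁ + n + N₂ = M₁ + m + M₂) (hMK : M₁ + m + M₂ = K₁ + l + K₂)
    (A : Matrix (Fin N₁ ⊕ Fin n ⊕ Fin N₂) (Fin M₁ ⊕ Fin m ⊕ Fin M₂) k)
    (B : Matrix (Fin M₁ ⊕ Fin m ⊕ Fin M₂) (Fin K₁ ⊕ Fin l ⊕ Fin K₂) k)
    (hA : ∃ A' : Matrix (Fin M₁ ⊕ Fin m ⊕ Fin M₂) (Fin N₁ ⊕ Fin n ⊕ Fin N₂) k,
      A * A' = 1 ∧ A' * A = 1)
    (hB : ∃ B' : Matrix (Fin K₁ ⊕ Fin l ⊕ Fin K₂) (Fin M₁ ⊕ Fin m ⊕ Fin M₂) k,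
      B * B' = 1 ∧ B' * B = 1)
    (D : Matrix (Fin N₁ ⊕ Fin n ⊕ Fin N₂) (Fin N₁ ⊕ Fin n ⊕ Fin N₂) k)
    (C : Matrix (Fin M₁ ⊕ Fin m ⊕ Fin M₂) (Fin M₁ ⊕ Fin m ⊕ Fin M₂) k)
    (E : Matrix (Fin M₁ ⊕ Fin m ⊕ Fin M₂) (Fin M₁ ⊕ Fin m ⊕ Fin M₂) k)
    (F : Matrix (Fin K₁ ⊕ Fin l ⊕ Fin K₂) (Fin K₁ ⊕ Fin l ⊕ Fin K₂) k)
    (hD : IsQ D) (hC : IsQ C) (hE : IsQ E) (hF : IsQ F) :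
    ∃ (D' : Matrix ((Fin M₁ ⊕ Fin N₁) ⊕ Fin n ⊕ (Fin N₂ ⊕ Fin M₂))
        ((Fin M₁ ⊕ Fin N₁) ⊕ Fin n ⊕ (Fin N₂ ⊕ Fin M₂)) k)
      (F' : Matrix ((Fin K₁ ⊕ Fin M₁) ⊕ Fin l ⊕ (Fin M₂ ⊕ Fin K₂))
        ((Fin K₁ ⊕ Fin M₁) ⊕ Fin l ⊕ (Fin M₂ ⊕ Fin K₂)) k),
      IsQ D' ∧ IsQ F' ∧ starMul (D * A * C) (E * B * F) = D' * starMul A B * F' := by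

  classical
  obtain ⟨A', hAA', hA'A⟩ := hA
  obtain ⟨B', hBB', hB'B⟩ := hB
  obtain ⟨hEu, he2, he3, he4, he5⟩ := hE
  obtain ⟨P, hEP, hPE⟩ := isUnit_iff_exists.mp hEu
  have hEQ : IsQ E := ⟨hEu, he2, he3, he4, he5⟩
  have hPQ : IsQ P := isQ_inv hEQ hEP hPE
  obtain ⟨hPu, hp2, hp3, hp4, hp5⟩ := hPQ
  obtain ⟨hCu, hc2, hc3, hc4, hc5⟩ := hC
  obtain ⟨Q₂, R₂, S₂, hQ, hR, hS, hfact⟩ :=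
    GR_pattern C E P hc2 hc3 hc4 hc5 he2 he3 he4 he5 hp2 hp3 hp4 hp5 hPE
  have uE : IsUnit (Ehat k E) := isUnit_iff_exists.mpr
    ⟨Ehat k P, by rw [← Ehat_mul, hEP, Ehat_one], by rw [← Ehat_mul, hPE, Ehat_one]⟩
  have uP : IsUnit (Ehat k P) := isUnit_iff_exists.mpr
    ⟨Ehat k E, by rw [← Ehat_mul, hPE, Ehat_one], by rw [← Ehat_mul, hEP, Ehat_one]⟩
  have uC : IsUnit (Chat k C) := by
    obtain ⟨Ci, h1, h2⟩ := isUnit_iff_exists.mp hCu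
    exact isUnit_iff_exists.mpr ⟨Chat k Ci, by rw [← Chat_mul, h1, Chat_one],
      by rw [← Chat_mul, h2, Chat_one]⟩
  have hU : IsUnit ((fromBlocks 1 Q₂ R₂ S₂).submatrix ⇑carE ⇑carE) := by
    rw [← hfact]; exact (uP.mul uC).mul uE
  refine ⟨Dtil k D * (bigX k A * Ehat k E * bigXinv k A'),
    (bigYinv k B' * ((fromBlocks 1 Q₂ R₂ S₂).submatrix ⇑carE ⇑carE) * bigY k B) * Fhat k F,
    isQ_mul (isQ_Dtil D hD) (isQ_left A A' hAA' hA'A E hEQ),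
    isQ_mul (isQ_right B B' hBB' hB'B Q₂ R₂ S₂ hQ hR hS hU) (isQ_Fhat F hF), ?_⟩
  have cX : ∀ (Z : Matrix (Fin M₁ ⊕ (Fin M₁ ⊕ Fin m ⊕ Fin M₂) ⊕ Fin M₂)
      ((Fin K₁ ⊕ Fin M₁) ⊕ Fin l ⊕ (Fin M₂ ⊕ Fin K₂)) k),
      bigXinv k A' * (bigX k A * Z) = Z := by
    intro Z; rw [← Matrix.mul_assoc, bigXinv_mul_bigX A A' hA'A, Matrix.one_mul]
  have cY : ∀ (Z : Matrix (Fin M₁ ⊕ (Fin M₁ ⊕ Fin m ⊕ Fin M₂) ⊕ Fin M₂)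
      ((Fin K₁ ⊕ Fin M₁) ⊕ Fin l ⊕ (Fin M₂ ⊕ Fin K₂)) k),
      bigY k B * (bigYinv k B' * Z) = Z := by
    intro Z; rw [← Matrix.mul_assoc, bigY_mul_bigYinv B B' hBB', Matrix.one_mul]
  have cE : ∀ (Z : Matrix (Fin M₁ ⊕ (Fin M₁ ⊕ Fin m ⊕ Fin M₂) ⊕ Fin M₂)
      ((Fin K₁ ⊕ Fin M₁) ⊕ Fin l ⊕ (Fin M₂ ⊕ Fin K₂)) k),
      Ehat k E * (Ehat k P * Z) = Z := by
    intro Z; rw [← Matrix.mul_assoc, ← Ehat_mul, hEP, Ehat_one, Matrix.one_mul]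
  rw [starMul_eq, starMul_eq, bigX_decomp, bigY_decomp, ← hfact]
  simp only [Matrix.mul_assoc]
  rw [cX, cY, cE]

end Neretin
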